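/- There exist constants c₃ > 0 and t₀ > 0, depending only on K, such that for every x ∈ ∂K, every 0 < t ≤ t₀, every a₀ ∈ Δ₀(x,t) and a₁ ∈ Δ₁(x,t) ∪ Δ₂(x,t), and every circle C of radius 1 passing through a₀ and a₁, the shorter of the two arcs of C between a₀ and a₁ is contained in the half-plane {y ∈ ℝ² : ⟨y − x, u_x⟩ ≥ −c₃·t}; i.e., the unit-radius arc joining two points of these triangles meets the boundary of K at depth at most c₃·t below the tangent line of K at x. -/

import Mathlib

open MeasureTheory ProbabilityTheory
open scoped RealInnerProductSpace

noncomputable section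

/-- The Euclidean plane. -/
abbrev E2 : Type := EuclideanSpace ℝ (Fin 2)

/-- The `r`-spindle convex hull of a set `X`: the intersection of all closed discs of
radius `r` containing `X`. -/
def spindleHull (r : ℝ) (X : Set E2) : Set E2 :=
  ⋂ v ∈ {v : E2 | X ⊆ Metric.closedBall v r}, Metric.closedBall v r

/-- `K` slides freely inside a disc of radius `ρ`. -/
def SlidesFreelyInDisc (K : Set E2) (ρ : ℝ) : Prop :=
  ∀ x ∈ frontier K, ∃ v : E2, dist x v = ρ ∧ K ⊆ Metric.closedBall v ρ

/-- A disc of radius `ρ` slides freely inside `K`. -/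
def DiscSlidesFreelyIn (K : Set E2) (ρ : ℝ) : Prop :=
  ∀ x ∈ frontier K, ∃ v : E2, dist x v = ρ ∧ Metric.closedBall v ρ ⊆ K

/-- `u` is an outer unit normal vector of `K` at the boundary point `x`. -/
def IsOuterNormal (K : Set E2) (x u : E2) : Prop :=
  ‖u‖ = 1 ∧ ∀ y ∈ K, (inner ℝ (y - x) u : ℝ) ≤ 0

/-- The triangle with vertices `x`, `w₁`, `w₂`. -/
def capTriangle (x w₁ w₂ : E2) : Set E2 := convexHull ℝ {x, w₁, w₂}

/-- The image of `S` under the homothety of centre `c` and ratio `1/20`. -/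
def shrink (c : E2) (S : Set E2) : Set E2 := (fun p => c + (20:ℝ)⁻¹ • (p - c)) '' S

/-- The image of `S` under the homothety of centre `c` and ratio `1/3`. -/
def shrinkThird (c : E2) (S : Set E2) : Set E2 := (fun p => c + (3:ℝ)⁻¹ • (p - c)) '' S

/-- `Â(z₀)`: the area gained by adding the point `z₀` to `{z₁, z₂}` in the spindle hull
of radius `1`. -/
def Ahat (z₀ z₁ z₂ : E2) : ℝ :=
  (volume (spindleHull 1 {z₀, z₁, z₂})).toReal
    - (volume (spindleHull 1 ({z₁, z₂} : Set E2))).toReal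

/-- The disc-cap of `K` with vertex `y` (outer unit normal `u`) and height `t`. -/
def discCap (K : Set E2) (y u : E2) (t : ℝ) : Set E2 :=
  K \ Metric.ball (y - (1 + t) • u) 1

/-- The uniform (normalized Lebesgue) measure on a set `S`. -/
def unif (S : Set E2) : Measure E2 := (volume S)⁻¹ • volume.restrict S

/-- The shorter (minor) arc of the unit circle centred at `v` between the points
`a₀` and `a₁` of that circle: the points of the circle lying on the far side of
the chord `[a₀, a₁]` from the centre `v`. -/
def minorArc (v a₀ a₁ : E2) : Set E2 :=
  {p : E2 | dist p v = 1 ∧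
    ‖midpoint ℝ a₀ a₁ - v‖ ^ 2 ≤ (inner ℝ (p - v) (midpoint ℝ a₀ a₁ - v) : ℝ)}

-- auxiliary lemmas

lemma two_orth_dep (e z z₀ : E2) (he : e ≠ 0) (hz : ⟪z, e⟫ = 0) (hz0 : ⟪z₀, e⟫ = 0)
    (h0 : z₀ ≠ 0) : ∃ c : ℝ, z = c • z₀ := by
  have h1 : Module.finrank ℝ (ℝ ∙ e : Submodule ℝ E2) = 1 :=
    finrank_span_singleton he
  have h2 := Submodule.finrank_add_finrank_orthogonal (K := (ℝ ∙ e : Submodule ℝ E2))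
  have h3 : Module.finrank ℝ E2 = 2 := by rw [finrank_euclideanSpace]; simp
  have hW : Module.finrank ℝ ((ℝ ∙ e)ᗮ : Submodule ℝ E2) = 1 := by omega
  have hzW : z ∈ (ℝ ∙ e)ᗮ := by
    rw [Submodule.mem_orthogonal_singleton_iff_inner_right]
    rwa [real_inner_comm]
  have hz0W : z₀ ∈ (ℝ ∙ e)ᗮ := by
    rw [Submodule.mem_orthogonal_singleton_iff_inner_right]
    rwa [real_inner_comm]
  have h0' : (⟨z₀, hz0W⟩ : ((ℝ ∙ e)ᗮ : Submodule ℝ E2)) ≠ 0 := by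
    simp [Subtype.ext_iff, h0]
  obtain ⟨c, hc⟩ := (finrank_eq_one_iff_of_nonzero' _ h0').mp hW ⟨z, hzW⟩
  exact ⟨c, by simpa [Subtype.ext_iff, eq_comm] using hc⟩

/-- the outer sliding-ball centre at `x` is `x - ρ₁ • u`. -/
lemma outer_center (K : Set E2) (hKc : IsClosed K)
    (ρ₀ ρ₁ : ℝ) (hρ₀ : 0 < ρ₀) (hρ₀₁ : ρ₀ ≤ ρ₁)
    (x u : E2) (hu : IsOuterNormal K x u)
    (vin : E2) (hvin1 : dist x vin = ρ₀) (hvin2 : Metric.closedBall vin ρ₀ ⊆ K)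
    (vout : E2) (hvout1 : dist x vout = ρ₁) (hvout2 : K ⊆ Metric.closedBall vout ρ₁) :
    vout = x - ρ₁ • u := by
  have hu1 : ‖u‖ = 1 := hu.1
  have hρ₁pos : 0 < ρ₁ := lt_of_lt_of_le hρ₀ hρ₀₁
  -- vin = x - ρ₀ • u
  have hvin_eq : vin = x - ρ₀ • u := by
    have hy : vin + ρ₀ • u ∈ K := by
      apply hvin2
      simp [Metric.mem_closedBall, dist_eq_norm, norm_smul, abs_of_pos hρ₀, hu1, le_refl]
    have h1 : (⟪vin + ρ₀ • u - x, u⟫ : ℝ) ≤ 0 := hu.2 _ hy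
    have h1' : (⟪vin - x, u⟫ : ℝ) + ρ₀ ≤ 0 := by
      have : vin + ρ₀ • u - x = (vin - x) + ρ₀ • u := by abel
      rw [this, inner_add_left, real_inner_smul_left,
        real_inner_self_eq_norm_sq, hu1] at h1
      nlinarith [h1]
    have hn : ‖vin - x‖ = ρ₀ := by rw [← dist_eq_norm, dist_comm]; exact hvin1
    have hkey : ‖(vin - x) + ρ₀ • u‖ ^ 2 ≤ 0 := by
      rw [norm_add_sq_real, real_inner_smul_right, norm_smul,
        Real.norm_eq_abs, abs_of_pos hρ₀, hu1, hn]
      nlinarith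
    have hz : (vin - x) + ρ₀ • u = 0 := by
      have := norm_nonneg ((vin - x) + ρ₀ • u)
      have h0 : ‖(vin - x) + ρ₀ • u‖ = 0 := by nlinarith
      exact norm_eq_zero.mp h0
    have : vin - x = -(ρ₀ • u) := by linear_combination (norm := abel) hz
    rw [sub_eq_iff_eq_add] at this
    rw [this]; abel
  -- distance between centres
  have hdist : ‖vin - vout‖ ≤ ρ₁ - ρ₀ := by
    by_cases hvv : vin = vout
    · simp [hvv]; linarith
    · set n := ‖vin - vout‖ with hn
      have hnpos : 0 < n := by
        rw [hn, norm_pos_iff]; exact sub_ne_zero_of_ne hvv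
      have hy : vin + (ρ₀ / n) • (vin - vout) ∈ K := by
        apply hvin2
        simp only [Metric.mem_closedBall, dist_eq_norm]
        have : vin + (ρ₀ / n) • (vin - vout) - vin = (ρ₀ / n) • (vin - vout) := by abel
        rw [this, norm_smul, Real.norm_eq_abs, abs_of_pos (by positivity)]
        rw [← hn]; field_simp; exact le_rfl
      have h2 := hvout2 hy
      rw [Metric.mem_closedBall, dist_eq_norm] at h2
      have heq : vin + (ρ₀ / n) • (vin - vout) - vout = (1 + ρ₀ / n) • (vin - vout) := by
        rw [add_smul, one_smul]; abel
      rw [heq, norm_smul, Real.norm_eq_abs, abs_of_pos (by positivity), ← hn] at h2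
      have : n + ρ₀ ≤ ρ₁ := by
        have hne : n ≠ 0 := ne_of_gt hnpos
        field_simp at h2
        nlinarith
      linarith
  -- inner product bound
  set a := x - vout with ha
  have hna : ‖a‖ = ρ₁ := by rw [ha, ← dist_eq_norm]; exact hvout1
  have hsub : a - ρ₀ • u = vin - vout := by rw [ha, hvin_eq]; abel
  have hq : ‖a - ρ₀ • u‖ ≤ ρ₁ - ρ₀ := by rw [hsub]; exact hdist
  have hiau : (⟪a, u⟫ : ℝ) ≥ ρ₁ := by
    have hsq : ‖a - ρ₀ • u‖ ^ 2 ≤ (ρ₁ - ρ₀) ^ 2 := by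
      have := norm_nonneg (a - ρ₀ • u)
      nlinarith
    rw [norm_sub_sq_real, real_inner_smul_right, norm_smul, Real.norm_eq_abs,
      abs_of_pos hρ₀, hu1, hna] at hsq
    nlinarith
  have hfinal : ‖a - ρ₁ • u‖ ^ 2 ≤ 0 := by
    rw [norm_sub_sq_real, real_inner_smul_right, norm_smul, Real.norm_eq_abs,
      abs_of_pos hρ₁pos, hu1, hna]
    nlinarith
  have hz : a - ρ₁ • u = 0 := by
    have := norm_nonneg (a - ρ₁ • u)
    have h0 : ‖a - ρ₁ • u‖ = 0 := by nlinarith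
    exact norm_eq_zero.mp h0
  have : a = ρ₁ • u := by linear_combination (norm := abel) hz
  rw [ha] at this
  rw [sub_eq_iff_eq_add] at this
  rw [eq_sub_iff_add_eq, add_comm]
  exact this.symm


lemma endgame (t ns h c lam ef sf mf : ℝ) (ht : 0 < t)
    (hpyth : h ^ 2 + ns = 1) (hns : ns ≤ 2 * t) (hnsp : 0 < ns) (hh0 : 0 ≤ h)
    (hcge : h ≤ c) (hcle : c ≤ 1) (hlamsq : lam ^ 2 * ns = 1 - c ^ 2)
    (hef : |ef| ≤ 1) (hsf : |sf| ≤ t) (hmf : -t ≤ mf) :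
    -(4 * t) ≤ (c - h) * ef + lam * sf + mf := by
  have hh1 : h ≤ 1 := by nlinarith
  have h1mh : 1 - h ≤ 2 * t := by nlinarith
  have hlam : |lam| ≤ 1 := by
    have hcc : h ^ 2 ≤ c ^ 2 := by nlinarith
    have h4 : lam ^ 2 * ns ≤ 1 * ns := by nlinarith
    exact (sq_le_one_iff_abs_le_one lam).mp (le_of_mul_le_mul_right h4 hnsp)
  obtain ⟨he1, he2⟩ := abs_le.mp hef
  obtain ⟨hl1, hl2⟩ := abs_le.mp hlam
  have t1 : -(2 * t) ≤ (c - h) * ef := by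
    have h5 : (c - h) * (-1) ≤ (c - h) * ef := by
      apply mul_le_mul_of_nonneg_left he1 (by linarith)
    nlinarith
  have t2 : -t ≤ lam * sf := by
    have h5 : |lam * sf| ≤ t := by
      rw [abs_mul]
      calc |lam| * |sf| ≤ 1 * t := by
            apply mul_le_mul hlam hsf (abs_nonneg _) zero_le_one
        _ = t := one_mul t
    have := neg_abs_le (lam * sf)
    linarith
  linarith

set_option maxHeartbeats 1000000 in
theorem arc_depth_bound
    (K : Set E2) (hK : IsCompact K) (hKconv : Convex ℝ K)
    (hKint : (interior K).Nonempty)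
    (ρ₀ ρ₁ : ℝ) (hρ₀ : 0 < ρ₀) (hρ₀₁ : ρ₀ ≤ ρ₁) (hρ₁ : ρ₁ < 1)
    (hin : DiscSlidesFreelyIn K ρ₀) (hout : SlidesFreelyInDisc K ρ₁) :
    ∃ c₃ > (0:ℝ), ∃ t₀ > (0:ℝ), ∀ x ∈ frontier K, ∀ u : E2, IsOuterNormal K x u →
      ∀ t : ℝ, 0 < t → t ≤ t₀ →
      ∀ w₁ w₂ : E2, w₁ ≠ w₂ →
        w₁ ∈ frontier K → (inner ℝ (w₁ - x) u : ℝ) = -t →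
        w₂ ∈ frontier K → (inner ℝ (w₂ - x) u : ℝ) = -t →
      ∀ a₀ ∈ shrink x (capTriangle x w₁ w₂),
      ∀ a₁ ∈ shrink w₁ (capTriangle x w₁ w₂) ∪ shrink w₂ (capTriangle x w₁ w₂),
      ∀ v : E2, dist a₀ v = 1 → dist a₁ v = 1 →
        minorArc v a₀ a₁ ⊆ {p : E2 | -(c₃ * t) ≤ (inner ℝ (p - x) u : ℝ)} := by
  have hKc : IsClosed K := hK.isClosed
  refine ⟨4, by norm_num, 1/4, by norm_num, ?_⟩
  intro x hx u hu t ht ht0 w₁ w₂ hww hw₁ hiw₁ hw₂ hiw₂ a₀ ha₀ a₁ ha₁ v hva₀ hva₁ p hp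
  have hu1 : ‖u‖ = 1 := hu.1
  have hxK : x ∈ K := by
    have := frontier_subset_closure (s := K) hx
    rwa [hKc.closure_eq] at this
  have hw₁K : w₁ ∈ K := by
    have := frontier_subset_closure (s := K) hw₁
    rwa [hKc.closure_eq] at this
  have hw₂K : w₂ ∈ K := by
    have := frontier_subset_closure (s := K) hw₂
    rwa [hKc.closure_eq] at this
  -- outer ball
  obtain ⟨vin, hvin1, hvin2⟩ := hin x hx
  obtain ⟨vout, hvout1, hvout2⟩ := hout x hx
  have hvout_eq : vout = x - ρ₁ • u :=
    outer_center K hKc ρ₀ ρ₁ hρ₀ hρ₀₁ x u hu vin hvin1 hvin2 vout hvout1 hvout2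
  -- quadratic bound for cap points
  have hKball : ∀ y ∈ K, ‖y - x‖ ^ 2 + 2 * ρ₁ * (⟪y - x, u⟫ : ℝ) ≤ 0 := by
    intro y hy
    have h2 := hvout2 hy
    rw [hvout_eq, Metric.mem_closedBall, dist_eq_norm] at h2
    have heq : y - (x - ρ₁ • u) = (y - x) + ρ₁ • u := by abel
    rw [heq] at h2
    have hsq : ‖(y - x) + ρ₁ • u‖ ^ 2 ≤ ρ₁ ^ 2 := by
      have := norm_nonneg ((y - x) + ρ₁ • u)
      nlinarith
    rw [norm_add_sq_real, real_inner_smul_right, norm_smul, Real.norm_eq_abs,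
      abs_of_pos (lt_of_lt_of_le hρ₀ hρ₀₁), hu1] at hsq
    nlinarith
  -- the slab/ball set T
  set r : ℝ := Real.sqrt (2 * t) with hr
  have hrpos : 0 ≤ r := Real.sqrt_nonneg _
  set T : Set E2 := {y | -t ≤ (⟪y - x, u⟫ : ℝ)} ∩ {y | (⟪y - x, u⟫ : ℝ) ≤ 0} ∩
      Metric.closedBall x r with hT
  have hlin : IsLinearMap ℝ (fun y : E2 => (⟪y, u⟫ : ℝ)) :=
    ⟨fun a b => inner_add_left a b u, fun c a => real_inner_smul_left a u c⟩
  have hTconv : Convex ℝ T := by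
    apply Convex.inter
    apply Convex.inter
    · have heq : {y : E2 | -t ≤ (⟪y - x, u⟫ : ℝ)} = {y : E2 | -t + ⟪x, u⟫ ≤ (⟪y, u⟫ : ℝ)} := by
        ext y
        rw [Set.mem_setOf_eq, Set.mem_setOf_eq, inner_sub_left]
        constructor <;> intro <;> linarith
      rw [heq]
      exact convex_halfSpace_ge hlin _
    · have heq : {y : E2 | (⟪y - x, u⟫ : ℝ) ≤ 0} = {y : E2 | (⟪y, u⟫ : ℝ) ≤ ⟪x, u⟫} := by
        ext y
        rw [Set.mem_setOf_eq, Set.mem_setOf_eq, inner_sub_left]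
        constructor <;> intro <;> linarith
      rw [heq]
      exact convex_halfSpace_le hlin _
    · exact convex_closedBall x r
  have hwT : ∀ w : E2, w ∈ K → (⟪w - x, u⟫ : ℝ) = -t → w ∈ T := by
    intro w hwK hiw
    refine ⟨⟨?_, ?_⟩, ?_⟩
    · show -t ≤ (⟪w - x, u⟫ : ℝ)
      rw [hiw]
    · show (⟪w - x, u⟫ : ℝ) ≤ 0
      rw [hiw]; linarith
    · have hb := hKball w hwK
      rw [hiw] at hb
      have h1 : ‖w - x‖ ^ 2 ≤ 2 * t := by nlinarith
      rw [Metric.mem_closedBall, dist_eq_norm, hr]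
      exact Real.le_sqrt_of_sq_le h1
  have hxT : x ∈ T := by
    refine ⟨⟨?_, ?_⟩, ?_⟩
    · show -t ≤ (⟪x - x, u⟫ : ℝ)
      rw [sub_self, inner_zero_left]; linarith
    · show (⟪x - x, u⟫ : ℝ) ≤ 0
      rw [sub_self, inner_zero_left]
    · rw [Metric.mem_closedBall, dist_self]; exact hrpos
  have hTri : capTriangle x w₁ w₂ ⊆ T := by
    apply convexHull_min _ hTconv
    intro y hy
    rcases hy with hy | hy | hy
    · rw [hy]; exact hxT
    · rw [hy]; exact hwT w₁ hw₁K hiw₁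
    · rw [Set.mem_singleton_iff.mp hy]; exact hwT w₂ hw₂K hiw₂
  -- shrink membership
  have hTriConv : Convex ℝ (capTriangle x w₁ w₂) := convex_convexHull ℝ _
  have hshrink : ∀ c : E2, c ∈ capTriangle x w₁ w₂ →
      ∀ a ∈ shrink c (capTriangle x w₁ w₂), a ∈ capTriangle x w₁ w₂ := by
    intro c hc a ha
    obtain ⟨q, hq, rfl⟩ := ha
    show c + (20:ℝ)⁻¹ • (q - c) ∈ capTriangle x w₁ w₂
    have heq : c + (20:ℝ)⁻¹ • (q - c) = ((19:ℝ)/20) • c + ((1:ℝ)/20) • q := by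
      module
    rw [heq]
    exact hTriConv hc hq (by norm_num) (by norm_num) (by norm_num)
  have hxTri : x ∈ capTriangle x w₁ w₂ := subset_convexHull ℝ _ (by simp)
  have hw₁Tri : w₁ ∈ capTriangle x w₁ w₂ := subset_convexHull ℝ _ (by simp)
  have hw₂Tri : w₂ ∈ capTriangle x w₁ w₂ := subset_convexHull ℝ _ (by simp)
  have ha₀T : a₀ ∈ T := hTri (hshrink x hxTri a₀ ha₀)
  have ha₁T : a₁ ∈ T := by
    rcases ha₁ with h | h
    · exact hTri (hshrink w₁ hw₁Tri a₁ h)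
    · exact hTri (hshrink w₂ hw₂Tri a₁ h)
  obtain ⟨⟨ha₀l, ha₀u⟩, ha₀b⟩ := ha₀T
  obtain ⟨⟨ha₁l, ha₁u⟩, ha₁b⟩ := ha₁T
  simp only [Set.mem_setOf_eq] at ha₀l ha₀u ha₁l ha₁u
  rw [Metric.mem_closedBall, dist_eq_norm] at ha₀b ha₁b
  -- midpoint facts
  obtain ⟨hp1, hp2⟩ := hp
  rw [dist_eq_norm] at hp1 hva₀ hva₁
  obtain ⟨m, hm⟩ : ∃ y : E2, y = midpoint ℝ a₀ a₁ := ⟨_, rfl⟩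
  rw [← hm] at hp2
  have hmid : m = (2:ℝ)⁻¹ • (a₀ + a₁) := by
    rw [hm, midpoint_eq_smul_add, invOf_eq_inv]
  have hmdecomp : m - x = (2:ℝ)⁻¹ • ((a₀ - x) + (a₁ - x)) := by
    rw [hmid]; module
  have him : (⟪m - x, u⟫ : ℝ) = ((⟪a₀ - x, u⟫ : ℝ) + (⟪a₁ - x, u⟫ : ℝ)) / 2 := by
    rw [hmdecomp, real_inner_smul_left, inner_add_left]; ring
  by_cases haa : a₀ = a₁
  · -- degenerate: p = a₀
    have hma : m = a₀ := by rw [hm, haa, midpoint_self]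
    rw [hma] at hp2
    have hn : ‖a₀ - v‖ = 1 := hva₀
    rw [hn] at hp2
    have hpa : ‖p - a₀‖ ^ 2 ≤ 0 := by
      have h7 : p - a₀ = (p - v) - (a₀ - v) := by abel
      rw [h7, norm_sub_sq_real, hp1, hn]
      nlinarith [hp2]
    have hpeq : p = a₀ := by
      have h0 : ‖p - a₀‖ = 0 := by nlinarith [norm_nonneg (p - a₀), hpa]
      have h8 := norm_eq_zero.mp h0
      linear_combination (norm := abel) h8
    rw [Set.mem_setOf_eq, hpeq]
    linarith
  · -- main case
    obtain ⟨s, hs⟩ : ∃ y : E2, y = a₀ - m := ⟨_, rfl⟩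
    have hs_half : s = (2:ℝ)⁻¹ • (a₀ - a₁) := by
      rw [hs, hmid]; module
    have hs_ne : s ≠ 0 := by
      rw [hs_half]
      simp only [ne_eq, smul_eq_zero, sub_eq_zero]
      push_neg
      exact ⟨by norm_num, haa⟩
    -- perpendicularity of s and m - v
    have hperp : (⟪s, m - v⟫ : ℝ) = 0 := by
      have hmv : m - v = (2:ℝ)⁻¹ • ((a₀ - v) + (a₁ - v)) := by
        rw [hmid]; module
      have hsv : s = (2:ℝ)⁻¹ • ((a₀ - v) - (a₁ - v)) := by
        rw [hs_half]; module
      rw [hmv, hsv, real_inner_smul_left, real_inner_smul_right,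
        inner_sub_left, inner_add_right, inner_add_right,
        real_inner_self_eq_norm_sq, real_inner_self_eq_norm_sq, hva₀, hva₁,
        real_inner_comm (a₁ - v) (a₀ - v)]
      ring
    -- pythagoras
    have hpyth : ‖m - v‖ ^ 2 + ‖s‖ ^ 2 = 1 := by
      have hdecomp : a₀ - v = s + (m - v) := by rw [hs]; abel
      have h9 := norm_add_sq_real s (m - v)
      rw [← hdecomp, hva₀, hperp] at h9
      nlinarith [h9]
    -- ‖s‖² ≤ 2t
    have hs_small : ‖s‖ ^ 2 ≤ 2 * t := by
      have h1 : ‖s‖ ≤ r := by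
        rw [hs_half, norm_smul, Real.norm_eq_abs]
        have h10 : a₀ - a₁ = (a₀ - x) - (a₁ - x) := by abel
        have h2 : ‖a₀ - a₁‖ ≤ ‖a₀ - x‖ + ‖a₁ - x‖ := by
          rw [h10]; exact norm_sub_le _ _
        rw [abs_of_pos (by norm_num)]
        linarith
      have h2 : r ^ 2 = 2 * t := Real.sq_sqrt (by linarith)
      nlinarith [norm_nonneg s, h1, h2]
    obtain ⟨h, hh⟩ : ∃ y : ℝ, y = ‖m - v‖ := ⟨_, rfl⟩
    rw [← hh] at hp2 hpyth
    have hhsq : h ^ 2 = 1 - ‖s‖ ^ 2 := by linarith [hpyth]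
    have hhpos : 0 < h := by
      have h2 : (0:ℝ) < 1 - 2 * t := by linarith
      nlinarith [norm_nonneg (m - v), hh, hhsq, hs_small]
    obtain ⟨e, he⟩ : ∃ y : E2, y = h⁻¹ • (m - v) := ⟨_, rfl⟩
    have he1 : ‖e‖ = 1 := by
      rw [he, norm_smul, Real.norm_eq_abs, abs_of_pos (inv_pos.mpr hhpos), ← hh]
      field_simp
    have he_ne : e ≠ 0 := by
      intro h0; rw [h0] at he1; simp at he1
    have hmv_he : m - v = h • e := by
      rw [he, smul_smul, mul_inv_cancel₀ (ne_of_gt hhpos), one_smul]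
    obtain ⟨c, hc⟩ : ∃ y : ℝ, y = (⟪p - v, e⟫ : ℝ) := ⟨_, rfl⟩
    have hc_ge : h ≤ c := by
      rw [hc, he, real_inner_smul_right]
      have h11 : h⁻¹ * (h ^ 2) ≤ h⁻¹ * (⟪p - v, m - v⟫ : ℝ) := by
        apply mul_le_mul_of_nonneg_left hp2 (le_of_lt (inv_pos.mpr hhpos))
      calc h = h⁻¹ * h ^ 2 := by field_simp
        _ ≤ _ := h11
    have hc_le : c ≤ 1 := by
      rw [hc]
      calc (⟪p - v, e⟫ : ℝ) ≤ ‖p - v‖ * ‖e‖ := real_inner_le_norm _ _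
        _ = 1 := by rw [hp1, he1]; ring
    obtain ⟨z, hz⟩ : ∃ y : E2, y = (p - v) - c • e := ⟨_, rfl⟩
    have hze : (⟪z, e⟫ : ℝ) = 0 := by
      rw [hz, inner_sub_left, real_inner_smul_left, real_inner_self_eq_norm_sq, he1, hc]
      ring
    have hnz : ‖z‖ ^ 2 = 1 - c ^ 2 := by
      have hdecomp : p - v = z + c • e := by rw [hz]; abel
      have h12 := norm_add_sq_real z (c • e)
      rw [← hdecomp, hp1, real_inner_smul_right, hze, norm_smul, Real.norm_eq_abs, he1] at h12
      have h13 : (|c| * 1) ^ 2 = c ^ 2 := by rw [mul_one, sq_abs]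
      linarith [h12, h13]
    have hse : (⟪s, e⟫ : ℝ) = 0 := by
      rw [he, real_inner_smul_right, hperp]; ring
    obtain ⟨lam, hlam⟩ := two_orth_dep e z s he_ne hze hse hs_ne
    have hlam_sq : lam ^ 2 * ‖s‖ ^ 2 = 1 - c ^ 2 := by
      have h14 : ‖z‖ = |lam| * ‖s‖ := by rw [hlam, norm_smul, Real.norm_eq_abs]
      rw [← hnz, h14, mul_pow, sq_abs]
    have hs_pos : 0 < ‖s‖ ^ 2 := by
      have := norm_pos_iff.mpr hs_ne
      positivity
    -- final decomposition
    have hdecomp : p - x = (c - h) • e + lam • s + (m - x) := by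
      have h1 : p - v = lam • s + c • e := by
        rw [← hlam, hz]; abel
      have h2 : p - x = (p - v) - (m - v) + (m - x) := by abel
      rw [h2, h1, hmv_he, sub_smul]; abel
    have hfin : (⟪p - x, u⟫ : ℝ) =
        (c - h) * (⟪e, u⟫ : ℝ) + lam * (⟪s, u⟫ : ℝ) + (⟪m - x, u⟫ : ℝ) := by
      rw [hdecomp, inner_add_left, inner_add_left, real_inner_smul_left, real_inner_smul_left]
    -- bounds
    have heu : |(⟪e, u⟫ : ℝ)| ≤ 1 := by
      have h15 := abs_real_inner_le_norm e u
      rwa [he1, hu1, one_mul] at h15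
    have hsu : |(⟪s, u⟫ : ℝ)| ≤ t := by
      have hseq : (⟪s, u⟫ : ℝ) = (⟪a₀ - x, u⟫ : ℝ) - (⟪m - x, u⟫ : ℝ) := by
        rw [hs]
        have h16 : a₀ - m = (a₀ - x) - (m - x) := by abel
        rw [h16, inner_sub_left]
      rw [hseq, him, abs_le]
      constructor
      · linarith
      · linarith
    have hmu : -t ≤ (⟪m - x, u⟫ : ℝ) := by rw [him]; linarith
    rw [Set.mem_setOf_eq, hfin]
    exact endgame t (‖s‖ ^ 2) h c lam _ _ _ ht hpyth hs_small hs_pos (le_of_lt hhpos)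
      hc_ge hc_le hlam_sq heu hsu hmu

end
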